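/- Let ξ be the compositional inverse, defined in a neighborhood of 0, of the map z ↦ z/(1+z)^{1−α}, where 0 < α < 1. Then ξ has the power series expansion ξ(w) = Σ_{n≥1} (((1−α)n)_{n−1}/n!) w^n, where (x)_m = x(x−1)⋯(x−m+1) denotes the falling factorial (with (x)_0 = 1). -/

import Mathlib

open Complex Filter Asymptotics PowerSeries Finset
open scoped Topology

/-- The falling factorial `(x)_m = x(x−1)⋯(x−m+1)` of a real number, with `(x)_0 = 1`. -/
noncomputable def fallingFactorialReal (x : ℝ) (m : ℕ) : ℝ :=
  ∏ i ∈ Finset.range m, (x - i)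

noncomputable def ffc (c : ℂ) (m : ℕ) : ℂ := ∏ i ∈ Finset.range m, (c - i)
@[simp] lemma ffc_zero (c : ℂ) : ffc c 0 = 1 := by simp [ffc]
lemma ffc_succ (c : ℂ) (m : ℕ) : ffc c (m + 1) = ffc c m * (c - m) := by
  simp [ffc, Finset.prod_range_succ]
lemma ffc_shift (c : ℂ) (m : ℕ) : ffc c (m + 1) = c * ffc (c - 1) m := by
  simp only [ffc, Finset.prod_range_succ', Nat.cast_zero, sub_zero]
  rw [mul_comm]
  congr 1
  refine Finset.prod_congr rfl fun i _ => ?_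
  push_cast; ring
noncomputable def Bs (c : ℂ) : ℂ⟦X⟧ := PowerSeries.mk fun k => ffc c k / k.factorial
@[simp] lemma coeff_Bs (c : ℂ) (k : ℕ) : coeff k (Bs c) = ffc c k / k.factorial := by
  simp [Bs]
@[simp] lemma Bs_zero : Bs 0 = 1 := by
  ext k
  rcases k with _ | k
  · simp
  · simp [ffc_shift, coeff_one]
lemma Bs_one : Bs 1 = 1 + X := by
  ext k
  rcases k with _ | k
  · simp
  · rcases k with _ | k
    · simp [ffc_succ]
    · simp [ffc_shift 1 (k+1), ffc_shift 0 k, coeff_one, coeff_X]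
lemma ode_Bs (c : ℂ) : (1 + X) * d⁄dX ℂ (Bs c) = c • Bs c := by
  ext k
  rw [add_mul, one_mul, map_add, coeff_derivative, coeff_smul, smul_eq_mul]
  rcases k with _ | k
  · simp [ffc_succ]
  · rw [coeff_succ_X_mul, coeff_derivative]
    simp only [coeff_Bs]
    rw [show k + 1 + 1 = (k+1) + 1 from rfl, ffc_succ c (k+1), Nat.factorial_succ (k+1)]
    have h1 : ((k : ℂ) + 1 + 1) ≠ 0 := by
      have : (0:ℝ) < (k:ℝ) + 1 + 1 := by positivity
      intro h; exact_mod_cast this.ne' (by exact_mod_cast congrArg Complex.re h)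
    have h2 : ((k+1).factorial : ℂ) ≠ 0 := by exact_mod_cast Nat.factorial_ne_zero _
    push_cast
    field_simp
    ring
lemma Bs_unique {S : ℂ⟦X⟧} {e : ℂ} (h0 : constantCoeff S = 1)
    (hD : (1 + X) * d⁄dX ℂ S = e • S) : S = Bs e := by
  ext k
  induction k with
  | zero => simpa [coeff_zero_eq_constantCoeff] using h0
  | succ k ih =>
    rw [coeff_Bs] at ih
    have key := congrArg (coeff k) hD
    rw [add_mul, one_mul, map_add, coeff_derivative, coeff_smul, smul_eq_mul, ih] at key
    have hk1 : ((k : ℂ) + 1) ≠ 0 := by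
      have : (0:ℝ) < (k:ℝ) + 1 := by positivity
      intro h; exact_mod_cast this.ne' (by exact_mod_cast congrArg Complex.re h)
    have h2 : ((k).factorial : ℂ) ≠ 0 := by exact_mod_cast Nat.factorial_ne_zero _
    have key2 : coeff (k+1) S * ((k:ℂ)+1) = (e - k) * (ffc e k / (k.factorial : ℂ)) := by
      rcases k with _ | j
      · have hx : coeff 0 (X * d⁄dX ℂ S) = 0 := by
          simp [coeff_zero_eq_constantCoeff, map_mul]
        rw [hx] at key
        simpa using key
      · rw [coeff_succ_X_mul, coeff_derivative, ih] at key
        push_cast at key ⊢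
        linear_combination key
    rw [coeff_Bs, ffc_succ, Nat.factorial_succ]
    have h3 : (((k+1) * k.factorial : ℕ) : ℂ) ≠ 0 := by
      push_cast; exact mul_ne_zero hk1 h2
    rw [eq_div_iff h3]
    field_simp at key2
    push_cast
    linear_combination key2

lemma constantCoeff_Bs (c : ℂ) : constantCoeff (Bs c) = 1 := by
  rw [← coeff_zero_eq_constantCoeff, coeff_Bs]; simp [ffc]

lemma Bs_mul (c d : ℂ) : Bs c * Bs d = Bs (c + d) := by
  apply Bs_unique
  · rw [map_mul, constantCoeff_Bs, constantCoeff_Bs, one_mul]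
  · rw [Derivation.leibniz, smul_eq_mul, smul_eq_mul, mul_add]
    have h1 := ode_Bs c
    have h2 := ode_Bs d
    rw [smul_eq_C_mul] at h1 h2 ⊢
    rw [map_add]
    linear_combination Bs c * h2 + Bs d * h1

lemma Bs_pow (c : ℂ) (m : ℕ) : Bs c ^ m = Bs (m * c) := by
  induction m with
  | zero => simp [Bs_zero]
  | succ m ih =>
    rw [pow_succ, ih, Bs_mul]
    push_cast
    ring_nf

lemma Bs_mul_deriv (x y : ℂ) : Bs (x + 1) * d⁄dX ℂ (Bs y) = y • Bs (x + y) := by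
  have : Bs (x + 1) = (1 + X) * Bs x := by rw [← Bs_one, Bs_mul, add_comm 1 x]
  rw [this, mul_assoc, mul_comm (Bs x), ← mul_assoc, ode_Bs, smul_eq_C_mul, smul_eq_C_mul,
    mul_assoc, Bs_mul]
  rw [add_comm y x]

lemma partTwo (b : ℂ) (n : ℕ) (hn : 1 ≤ n) (c : ℕ → ℂ)
    (hc : ∀ m, 1 ≤ m → m ≤ n →
      coeff m (∑ k ∈ Finset.range (n+1), c k • (X * Bs (-b)) ^ k) = coeff m (X : ℂ⟦X⟧)) :
    (n : ℂ) * c n = ffc (b * n) (n - 1) / ((n-1).factorial : ℂ) := by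
  set U : ℂ⟦X⟧ := Bs (-b) with hU
  set F : ℂ⟦X⟧ := X * U with hF
  set P : ℂ⟦X⟧ := ∑ k ∈ Finset.range (n+1), c k • F ^ k with hP
  set W : ℂ⟦X⟧ := Bs (b * n) with hW
  have hXP : ∀ m, 1 ≤ m → m ≤ n → coeff m (X - P) = 0 := by
    intro m h1 h2
    rw [map_sub, hc m h1 h2, sub_self]
  -- step 1
  have h1 : coeff (n-1) (W * d⁄dX ℂ (X - P)) = 0 := by
    rw [coeff_mul]
    apply Finset.sum_eq_zero
    rintro ⟨i, j⟩ hij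
    rw [Finset.HasAntidiagonal.mem_antidiagonal] at hij
    have hj : j + 1 ≤ n := by omega
    rw [coeff_derivative, hXP (j+1) (by omega) hj]
    simp
  -- step 2
  have h2 : coeff (n-1) W = coeff (n-1) (W * d⁄dX ℂ P) := by
    have : (d⁄dX ℂ) (X - P) = 1 - d⁄dX ℂ P := by rw [map_sub, derivative_X]
    rw [this, mul_sub, mul_one, map_sub] at h1
    exact sub_eq_zero.mp h1
  -- step 3: expand D P
  have h3 : coeff (n-1) (W * d⁄dX ℂ P) =
      ∑ k ∈ Finset.range (n+1),
        c k * ((k : ℂ) * coeff (n-1) (W * (F ^ (k-1) * d⁄dX ℂ F))) := by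
    rw [hP, map_sum, Finset.mul_sum, map_sum]
    refine Finset.sum_congr rfl fun k _ => ?_
    rw [Derivation.map_smul, Derivation.leibniz_pow, smul_eq_mul]
    rw [← Nat.cast_smul_eq_nsmul ℂ k, smul_smul, mul_smul_comm, map_smul, smul_eq_mul]
    ring
  -- step 4: evaluate each term
  have h4 : ∀ k, 1 ≤ k → k ≤ n →
      coeff (n-1) (W * (F ^ (k-1) * d⁄dX ℂ F)) = if k = n then 1 else 0 := by
    intro k hk1 hkn
    have hDF : d⁄dX ℂ F = U + X * d⁄dX ℂ U := by
      rw [hF, Derivation.leibniz, smul_eq_mul, smul_eq_mul, derivative_X, mul_one, add_comm]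
    have hsplit : W * (F ^ (k-1) * d⁄dX ℂ F)
        = X ^ (k-1) * (W * U ^ k) + X ^ k * (W * U ^ (k-1) * d⁄dX ℂ U) := by
      rw [hDF, hF, mul_pow]
      have hXk : (X:ℂ⟦X⟧) ^ k = X ^ (k-1) * X := by
        conv_lhs => rw [show k = (k-1)+1 by omega]
        rw [pow_succ]
      have hUk : U ^ k = U ^ (k-1) * U := by
        conv_lhs => rw [show k = (k-1)+1 by omega]
        rw [pow_succ]
      rw [hXk, hUk]; ring
    have hkc : ((k-1 : ℕ) : ℂ) = (k : ℂ) - 1 := by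
      rw [Nat.cast_sub hk1]; norm_num
    have hWUk : W * U ^ k = Bs (b * n - b * k) := by
      rw [hW, hU, Bs_pow, Bs_mul]; congr 1; ring
    have hWUk1 : W * U ^ (k-1) * d⁄dX ℂ U = (-b) • Bs (b * n - b * k - 1) := by
      have e1 : W * U ^ (k-1) = Bs ((b * n - b * k + b - 1) + 1) := by
        rw [hW, hU, Bs_pow, Bs_mul]; congr 1; rw [hkc]; ring
      rw [e1, hU, Bs_mul_deriv]
      congr 1; ring
    rw [hsplit, hWUk, hWUk1, map_add, coeff_X_pow_mul', coeff_X_pow_mul',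
      if_pos (by omega : k - 1 ≤ n - 1)]
    rcases eq_or_lt_of_le hkn with rfl | hlt
    · rw [if_neg (by omega), if_pos rfl, sub_self, Bs_zero, add_zero]
      have : k - 1 - (k - 1) = 0 := by omega
      rw [this, coeff_zero_eq_constantCoeff, map_one]
    · rw [if_pos (by omega : k ≤ n - 1), if_neg (by omega)]
      set m := n - k with hm
      have hm1 : 1 ≤ m := by omega
      have hbm : b * n - b * k = b * m := by
        rw [hm, Nat.cast_sub hkn]; ring
      have hidx1 : n - 1 - (k - 1) = m := by omega
      have hidx2 : n - 1 - k = m - 1 := by omega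
      rw [hidx1, hidx2, hbm, map_smul, coeff_Bs, coeff_Bs, smul_eq_mul]
      have hm' : m - 1 + 1 = m := by omega
      have h5 : ((m - 1 : ℕ) : ℂ) + 1 = m := by
        rw [Nat.cast_sub hm1]; push_cast; ring
      have hff : ffc (b * m) m = (b * m) * ffc (b * m - 1) (m - 1) := by
        have e := ffc_shift (b * (m:ℂ)) (m - 1)
        rw [hm'] at e
        exact e
      have hfact : (m.factorial : ℂ) = (m : ℂ) * ((m-1).factorial : ℂ) := by
        have e : (((m - 1 + 1).factorial : ℕ) : ℂ)
            = (((m - 1 : ℕ) : ℂ) + 1) * ((m-1).factorial : ℂ) := by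
          rw [Nat.factorial_succ]; push_cast; ring
        rw [hm', h5] at e
        exact e
      have hm0 : ((m : ℕ) : ℂ) ≠ 0 := Nat.cast_ne_zero.mpr (by omega)
      have hf0 : (((m-1).factorial : ℕ) : ℂ) ≠ 0 := Nat.cast_ne_zero.mpr (Nat.factorial_ne_zero _)
      rw [hff, hfact]
      field_simp
      ring
  -- step 6
  have h6 : coeff (n-1) W = (n : ℂ) * c n := by
    rw [h2, h3, Finset.sum_eq_single n]
    · rw [h4 n hn le_rfl, if_pos rfl]; ring
    · intro k hk hkn
      rcases Nat.eq_zero_or_pos k with rfl | hk1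
      · simp
      · rw [h4 k hk1 (by simp at hk; omega), if_neg hkn]; ring
    · intro h; exact absurd (Finset.self_mem_range_succ n) h
  rw [← h6, hW, coeff_Bs]

/-- `f` has asymptotic expansion given by the coefficients of `S` to order `N` at `0`. -/
def AsympTo (f : ℂ → ℂ) (S : ℂ⟦X⟧) (N : ℕ) : Prop :=
  (fun z : ℂ => f z - ∑ k ∈ Finset.range N, coeff k S * z ^ k) =O[𝓝 (0:ℂ)] fun z => z ^ N

lemma sum_range_O {a : ℕ → ℂ} {N M : ℕ} (h : ∀ m < N, a m = 0) :
    (fun z : ℂ => ∑ k ∈ Finset.range M, a k * z ^ k) =O[𝓝 (0:ℂ)] fun z => z ^ N := by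
  refine IsBigO.fun_sum fun k _ => ?_
  rcases lt_or_ge k N with hk | hk
  · simpa [h k hk] using (isBigO_zero (fun z : ℂ => z ^ N) (𝓝 0) : _)
  · refine IsBigO.of_bound ‖a k‖ ?_
    filter_upwards [Metric.ball_mem_nhds (0:ℂ) one_pos] with z hz
    rw [Metric.mem_ball, dist_zero_right] at hz
    rw [norm_mul, norm_pow, norm_pow]
    have : ‖z‖ ^ k ≤ ‖z‖ ^ N := pow_le_pow_of_le_one (norm_nonneg _) hz.le hk
    exact mul_le_mul_of_nonneg_left this (norm_nonneg _)

lemma sum_range_coeff_zero {N : ℕ} {a : ℕ → ℂ}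
    (h : (fun z : ℂ => ∑ k ∈ Finset.range N, a k * z ^ k) =O[𝓝[≠] (0:ℂ)] fun z => z ^ N) :
    ∀ m < N, a m = 0 := by
  induction N generalizing a with
  | zero => intro m hm; omega
  | succ N ih =>
    have ha0 : a 0 = 0 := by
      have t1 : Tendsto (fun z : ℂ => ∑ k ∈ Finset.range (N+1), a k * z ^ k) (𝓝[≠] (0:ℂ))
          (𝓝 0) := by
        refine h.trans_tendsto ?_
        have hcp : Continuous fun z : ℂ => z ^ (N+1) := continuous_pow (N+1)
        have := hcp.tendsto 0
        rw [zero_pow (Nat.succ_ne_zero N)] at this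
        exact this.mono_left nhdsWithin_le_nhds
      have t2 : Tendsto (fun z : ℂ => ∑ k ∈ Finset.range (N+1), a k * z ^ k) (𝓝[≠] (0:ℂ))
          (𝓝 (a 0)) := by
        have hc : Continuous fun z : ℂ => ∑ k ∈ Finset.range (N+1), a k * z ^ k :=
          continuous_finset_sum _ fun k _ => continuous_const.mul (continuous_pow k)
        have hval : ∑ k ∈ Finset.range (N+1), a k * (0:ℂ) ^ k = a 0 := by
          rw [Finset.sum_range_succ']
          simp
        have := hc.tendsto 0
        rw [hval] at this
        exact this.mono_left nhdsWithin_le_nhds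
      exact tendsto_nhds_unique t2 t1
    have hfac : ∀ z : ℂ, ∑ k ∈ Finset.range (N+1), a k * z ^ k
        = z * ∑ k ∈ Finset.range N, a (k+1) * z ^ k := by
      intro z
      rw [Finset.sum_range_succ', ha0, Finset.mul_sum]
      simp only [zero_mul, add_zero, pow_zero, mul_one]
      exact Finset.sum_congr rfl fun k _ => by ring
    have hQ : (fun z : ℂ => ∑ k ∈ Finset.range N, a (k+1) * z ^ k) =O[𝓝[≠] (0:ℂ)]
        fun z => z ^ N := by
      rw [isBigO_iff] at h ⊢
      obtain ⟨C, hC⟩ := h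
      refine ⟨C, ?_⟩
      filter_upwards [hC, self_mem_nhdsWithin] with z hz hz0
      rw [hfac z, norm_mul, pow_succ', norm_mul] at hz
      have hz0' : (0:ℝ) < ‖z‖ := norm_pos_iff.mpr hz0
      calc ‖∑ k ∈ Finset.range N, a (k+1) * z ^ k‖
          ≤ C * ‖z ^ N‖ := by
            rw [← mul_le_mul_iff_right₀ hz0']
            calc ‖z‖ * ‖∑ k ∈ Finset.range N, a (k+1) * z ^ k‖ ≤ C * (‖z‖ * ‖z ^ N‖) := hz
            _ = ‖z‖ * (C * ‖z ^ N‖) := by ring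
        _ = C * ‖z ^ N‖ := rfl
    intro m hm
    rcases m with _ | m
    · exact ha0
    · exact ih hQ m (by omega)

lemma AsympTo.unique {f : ℂ → ℂ} {S T : ℂ⟦X⟧} {N : ℕ}
    (hS : AsympTo f S N) (hT : AsympTo f T N) : ∀ m < N, coeff m S = coeff m T := by
  have h := hT.sub hS
  have he : (fun z : ℂ => (f z - ∑ k ∈ Finset.range N, coeff k T * z ^ k)
      - (f z - ∑ k ∈ Finset.range N, coeff k S * z ^ k))
      = fun z : ℂ => ∑ k ∈ Finset.range N, (coeff k S - coeff k T) * z ^ k := by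
    funext z
    calc (f z - ∑ k ∈ Finset.range N, coeff k T * z ^ k)
        - (f z - ∑ k ∈ Finset.range N, coeff k S * z ^ k)
        = (∑ k ∈ Finset.range N, coeff k S * z ^ k)
          - ∑ k ∈ Finset.range N, coeff k T * z ^ k := by ring
      _ = ∑ k ∈ Finset.range N, (coeff k S - coeff k T) * z ^ k := by
          rw [← Finset.sum_sub_distrib]
          exact Finset.sum_congr rfl fun k _ => by ring
  rw [he] at h
  intro m hm
  have := sum_range_coeff_zero (h.mono nhdsWithin_le_nhds) m hm
  exact sub_eq_zero.mp this

lemma eval_trunc (S : ℂ⟦X⟧) (N : ℕ) (z : ℂ) :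
    Polynomial.eval z (trunc N S) = ∑ k ∈ Finset.range N, coeff k S * z ^ k := by
  induction N with
  | zero => simp
  | succ N ih =>
    rw [trunc_succ, Polynomial.eval_add, ih, Finset.sum_range_succ, Polynomial.eval_monomial]

lemma AsympTo.congr {f g : ℂ → ℂ} {S : ℂ⟦X⟧} {N : ℕ} (h : AsympTo f S N)
    (hfg : ∀ᶠ z in 𝓝 (0:ℂ), f z = g z) : AsympTo g S N := by
  refine h.congr' ?_ EventuallyEq.rfl
  filter_upwards [hfg] with z hz
  rw [hz]

lemma AsympTo.smul {f : ℂ → ℂ} {S : ℂ⟦X⟧} {N : ℕ} (c : ℂ) (h : AsympTo f S N) :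
    AsympTo (fun z => c * f z) (c • S) N := by
  have := h.const_mul_left c
  refine this.congr' ?_ EventuallyEq.rfl
  refine Eventually.of_forall fun z => ?_
  simp only [map_smul, smul_eq_mul]
  rw [mul_sub, Finset.mul_sum]
  congr 1
  exact Finset.sum_congr rfl fun k _ => by ring

lemma AsympTo.sum {ι : Type*} {s : Finset ι} {f : ι → ℂ → ℂ} {S : ι → ℂ⟦X⟧} {N : ℕ}
    (h : ∀ i ∈ s, AsympTo (f i) (S i) N) :
    AsympTo (fun z => ∑ i ∈ s, f i z) (∑ i ∈ s, S i) N := by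
  have := IsBigO.sum (fun i hi => h i hi)
  refine this.congr' ?_ EventuallyEq.rfl
  refine Eventually.of_forall fun z => ?_
  rw [Finset.sum_apply]
  show ∑ i ∈ s, (f i z - ∑ k ∈ Finset.range N, coeff k (S i) * z ^ k)
      = (∑ i ∈ s, f i z) - ∑ k ∈ Finset.range N, coeff k (∑ i ∈ s, S i) * z ^ k
  rw [Finset.sum_sub_distrib]
  congr 1
  rw [Finset.sum_comm]
  refine Finset.sum_congr rfl fun k _ => ?_
  rw [map_sum, Finset.sum_mul]

lemma pow_isBigO_one (N : ℕ) : (fun z : ℂ => z ^ N) =O[𝓝 (0:ℂ)] fun _ => (1:ℂ) := by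
  refine IsBigO.of_bound 1 ?_
  filter_upwards [Metric.ball_mem_nhds (0:ℂ) one_pos] with z hz
  rw [Metric.mem_ball, dist_zero_right] at hz
  rw [norm_pow, norm_one, one_mul]
  exact pow_le_one₀ (norm_nonneg _) hz.le

lemma partial_isBigO_one (a : ℕ → ℂ) (N : ℕ) :
    (fun z : ℂ => ∑ k ∈ Finset.range N, a k * z ^ k) =O[𝓝 (0:ℂ)] fun _ => (1:ℂ) := by
  have hc : Continuous fun z : ℂ => ∑ k ∈ Finset.range N, a k * z ^ k :=
    continuous_finset_sum _ fun k _ => continuous_const.mul (continuous_pow k)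
  exact (hc.tendsto 0).isBigO_one ℂ

lemma AsympTo.isBigO_one {f : ℂ → ℂ} {S : ℂ⟦X⟧} {N : ℕ} (h : AsympTo f S N) :
    f =O[𝓝 (0:ℂ)] fun _ => (1:ℂ) := by
  have h1 := (h.trans (pow_isBigO_one N)).add (partial_isBigO_one (fun k => coeff k S) N)
  refine h1.congr' ?_ EventuallyEq.rfl
  exact Eventually.of_forall fun z => by simp

lemma polyO {P : Polynomial ℂ} {N : ℕ} (h : ∀ m < N, P.coeff m = 0) :
    (fun z : ℂ => Polynomial.eval z P) =O[𝓝 (0:ℂ)] fun z => z ^ N := by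
  have he : (fun z : ℂ => Polynomial.eval z P)
      = fun z => ∑ i ∈ Finset.range (P.natDegree + 1), P.coeff i * z ^ i :=
    funext fun z => Polynomial.eval_eq_sum_range z
  rw [he]
  exact sum_range_O h

lemma AsympTo.mul {u v : ℂ → ℂ} {S T : ℂ⟦X⟧} {N : ℕ}
    (hu : AsympTo u S N) (hv : AsympTo v T N) :
    AsympTo (fun z => u z * v z) (S * T) N := by
  have hvb := hv.isBigO_one
  have hSb := partial_isBigO_one (fun k => coeff k S) N
  have T1 : (fun z : ℂ => (u z - ∑ k ∈ Finset.range N, coeff k S * z ^ k) * v z)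
      =O[𝓝 (0:ℂ)] fun z => z ^ N := by
    have := Asymptotics.IsBigO.mul hu hvb
    refine this.trans (IsBigO.of_bound 1 ?_)
    exact Eventually.of_forall fun z => by simp
  have T2 : (fun z : ℂ => (∑ k ∈ Finset.range N, coeff k S * z ^ k)
      * (v z - ∑ k ∈ Finset.range N, coeff k T * z ^ k)) =O[𝓝 (0:ℂ)] fun z => z ^ N := by
    have := Asymptotics.IsBigO.mul hSb hv
    refine this.trans (IsBigO.of_bound 1 ?_)
    exact Eventually.of_forall fun z => by simp
  have hcoeff : ∀ m < N, (trunc N S * trunc N T - trunc N (S * T)).coeff m = 0 := by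
    intro m hm
    rw [Polynomial.coeff_sub, Polynomial.coeff_mul, coeff_trunc, if_pos hm, PowerSeries.coeff_mul]
    rw [sub_eq_zero]
    refine Finset.sum_congr rfl fun p hp => ?_
    rw [Finset.HasAntidiagonal.mem_antidiagonal] at hp
    rw [coeff_trunc, coeff_trunc, if_pos (by omega : p.1 < N), if_pos (by omega : p.2 < N)]
  have T3 := polyO hcoeff
  have hsum := (T1.add T2).add T3
  refine hsum.congr' ?_ EventuallyEq.rfl
  refine Eventually.of_forall fun z => ?_
  show (u z - ∑ k ∈ Finset.range N, coeff k S * z ^ k) * v z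
      + (∑ k ∈ Finset.range N, coeff k S * z ^ k)
        * (v z - ∑ k ∈ Finset.range N, coeff k T * z ^ k)
      + Polynomial.eval z (trunc N S * trunc N T - trunc N (S * T))
      = u z * v z - ∑ k ∈ Finset.range N, coeff k (S * T) * z ^ k
  rw [Polynomial.eval_sub, Polynomial.eval_mul, eval_trunc, eval_trunc, eval_trunc]
  ring

lemma mem_slit (z : ℂ) (hz : ‖z‖ < 1) : 1 + z ∈ slitPlane := by
  rw [mem_slitPlane_iff]
  left
  have : |z.re| ≤ ‖z‖ := abs_re_le_norm z
  simp only [add_re, one_re]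
  have := abs_le.mp this
  linarith

lemma iter_cpow (a : ℂ) (m : ℕ) :
    ∀ z : ℂ, ‖z‖ < 1 → iteratedDeriv m (fun w => (1 + w) ^ a) z
      = ffc a m * (1 + z) ^ (a - m) := by
  induction m with
  | zero => intro z hz; simp [ffc]
  | succ m ih =>
    intro z hz
    rw [iteratedDeriv_succ]
    have hev : iteratedDeriv m (fun w => (1 + w) ^ a)
        =ᶠ[𝓝 z] fun w => ffc a m * (1 + w) ^ (a - m) := by
      filter_upwards [Metric.ball_mem_nhds z (by linarith : (0:ℝ) < 1 - ‖z‖)] with w hw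
      refine ih w ?_
      rw [Metric.mem_ball] at hw
      calc ‖w‖ ≤ ‖w - z‖ + ‖z‖ := by
            simpa using norm_add_le (w - z) z
        _ < 1 := by rw [← dist_eq_norm] at *; linarith
    rw [hev.deriv_eq]
    have hd : HasDerivAt (fun w : ℂ => ffc a m * (1 + w) ^ (a - m))
        (ffc a m * ((a - m) * (1 + z) ^ (a - m - 1) * 1)) z := by
      refine HasDerivAt.const_mul _ ?_
      exact HasDerivAt.cpow_const ((hasDerivAt_id z).const_add 1) (mem_slit z hz)
    rw [hd.deriv, ffc_succ]
    push_cast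
    ring_nf

lemma coeff_eq_iteratedDeriv {f : ℂ → ℂ} {p : FormalMultilinearSeries ℂ ℂ ℂ}
    (hp : HasFPowerSeriesAt f p 0) (m : ℕ) :
    p.coeff m = iteratedDeriv m f 0 / m.factorial := by
  obtain ⟨r, hr⟩ := hp
  have h := hr.factorial_smul (1:ℂ) m
  rw [iteratedDeriv_eq_iteratedFDeriv]
  rw [eq_div_iff (by exact_mod_cast Nat.cast_ne_zero.mpr (Nat.factorial_ne_zero m) : ((m.factorial : ℕ) : ℂ) ≠ 0)]
  rw [← h, FormalMultilinearSeries.coeff]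
  rw [nsmul_eq_mul]
  show (p m) (fun _ => 1) * (m.factorial : ℂ) = _
  ring

lemma analytic_asympTo {f : ℂ → ℂ} {p : FormalMultilinearSeries ℂ ℂ ℂ}
    (hp : HasFPowerSeriesAt f p 0) (N : ℕ) :
    AsympTo f (PowerSeries.mk fun k => p.coeff k) N := by
  have h := hp.isBigO_sub_partialSum_pow N
  have he : (fun y : ℂ => f (0 + y) - p.partialSum N y)
      = fun z : ℂ => f z - ∑ k ∈ Finset.range N, coeff k (PowerSeries.mk fun k => p.coeff k) * z ^ k := by
    funext z
    rw [zero_add]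
    congr 1
    rw [FormalMultilinearSeries.partialSum]
    refine Finset.sum_congr rfl fun k _ => ?_
    rw [FormalMultilinearSeries.apply_eq_pow_smul_coeff, coeff_mk, smul_eq_mul]
    ring
  rw [he] at h
  refine h.trans ?_
  refine IsBigO.of_bound 1 (Eventually.of_forall fun z => ?_)
  simp [norm_pow]

lemma asympTo_one {M : ℕ} (h : 0 < M) : AsympTo (fun _ => (1:ℂ)) 1 M := by
  have he : ∀ z : ℂ, (1:ℂ) - ∑ k ∈ Finset.range M, coeff k (1:ℂ⟦X⟧) * z ^ k = 0 := by
    intro z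
    rw [Finset.sum_eq_single 0]
    · simp
    · intro k _ hk
      rw [coeff_one, if_neg hk, zero_mul]
    · intro hnot
      exact absurd (Finset.mem_range.mpr h) hnot
  have : (fun z : ℂ => (1:ℂ) - ∑ k ∈ Finset.range M, coeff k (1:ℂ⟦X⟧) * z ^ k)
      = fun _ => (0:ℂ) := funext he
  unfold AsympTo
  rw [this]
  exact isBigO_zero _ _

lemma asympTo_X {M : ℕ} (h : 1 < M) : AsympTo (fun z => z) (X : ℂ⟦X⟧) M := by
  have he : ∀ z : ℂ, z - ∑ k ∈ Finset.range M, coeff k (X : ℂ⟦X⟧) * z ^ k = 0 := by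
    intro z
    rw [Finset.sum_eq_single 1]
    · simp
    · intro k _ hk
      rw [coeff_X, if_neg hk, zero_mul]
    · intro hnot
      exact absurd (Finset.mem_range.mpr h) hnot
  have : (fun z : ℂ => z - ∑ k ∈ Finset.range M, coeff k (X:ℂ⟦X⟧) * z ^ k)
      = fun _ => (0:ℂ) := funext he
  unfold AsympTo
  rw [this]
  exact isBigO_zero _ _

/-- Let `ξ` be the local compositional inverse at `0` of `z ↦ z/(1+z)^{1−α}` (`0 < α < 1`,
principal branch). Then the Taylor coefficients of `ξ` at `0` are
`((1−α)n)_{n−1}/n!`, i.e. `ξ⁽ⁿ⁾(0) = ((1−α)n)_{n−1}` for `n ≥ 1` (Lagrange inversion). -/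
theorem lagrange_inversion_coefficients (α : ℝ) (hα0 : 0 < α) (hα1 : α < 1)
    (ξ : ℂ → ℂ) (hξ : AnalyticAt ℂ ξ 0) (hξ0 : ξ 0 = 0)
    (hinv : ∀ᶠ z in 𝓝 (0 : ℂ), ξ (z * (1 + z) ^ ((α : ℂ) - 1)) = z) :
    ∀ n : ℕ, 1 ≤ n →
      iteratedDeriv n ξ 0 = ((fallingFactorialReal ((1 - α) * n) (n - 1) : ℝ) : ℂ) := by
  intro n hn
  set a : ℂ := (α : ℂ) - 1 with ha
  obtain ⟨p, hp⟩ := hξ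
  set c : ℕ → ℂ := fun k => p.coeff k with hcdef
  set g : ℂ → ℂ := fun z => (1 + z) ^ a with hgdef
  set f : ℂ → ℂ := fun z => z * g z with hfdef
  set N : ℕ := n + 1 with hNdef
  -- the expansion of g
  have hg_an : AnalyticAt ℂ g 0 := by
    refine AnalyticAt.cpow (analyticAt_const.add analyticAt_id) analyticAt_const ?_
    simpa using mem_slit 0 (by norm_num)
  obtain ⟨q, hq⟩ := hg_an
  have hq_coeff : ∀ m, q.coeff m = ffc a m / m.factorial := by
    intro m
    rw [coeff_eq_iteratedDeriv hq m, iter_cpow a m 0 (by norm_num)]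
    norm_num
  have hgA : AsympTo g (Bs a) N := by
    have h1 := analytic_asympTo hq N
    have h2 : (PowerSeries.mk fun k => q.coeff k) = Bs a := by
      ext k
      rw [coeff_mk, hq_coeff, coeff_Bs]
    rwa [h2] at h1
  -- facts about f
  have hg_cont : ContinuousAt g 0 := hq.analyticAt.continuousAt
  have hf00 : f 0 = 0 := by simp [hfdef]
  have hft : Tendsto f (𝓝 0) (𝓝 (0:ℂ)) := by
    have hc : ContinuousAt f 0 := continuousAt_id.mul hg_cont
    have := hc.tendsto
    rwa [hf00] at this
  have hfO : f =O[𝓝 (0:ℂ)] fun z => z := by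
    have hg1 : g =O[𝓝 (0:ℂ)] fun _ => (1:ℂ) := (hg_cont.tendsto).isBigO_one ℂ
    have h2 := (isBigO_refl (fun z : ℂ => z) (𝓝 0)).mul hg1
    refine h2.trans (IsBigO.of_bound 1 (Eventually.of_forall fun z => ?_))
    simp
  have hfpow : (fun z => (f z) ^ N) =O[𝓝 (0:ℂ)] fun z => z ^ N := hfO.pow N
  -- the asymptotic expansion chain
  have hAf : AsympTo f (X * Bs a) N := (asympTo_X (by omega)).mul hgA
  have hApow : ∀ k : ℕ, AsympTo (fun z => (f z) ^ k) ((X * Bs a) ^ k) N := by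
    intro k
    induction k with
    | zero => simpa using asympTo_one (M := N) (by omega)
    | succ k ih =>
      have h2 := ih.mul hAf
      rw [← pow_succ] at h2
      have he : (fun z => (f z) ^ k * f z) = fun z => (f z) ^ (k+1) :=
        funext fun z => by rw [← pow_succ]
      rwa [he] at h2
  set P : ℂ⟦X⟧ := ∑ k ∈ Finset.range N, c k • (X * Bs a) ^ k with hPdef
  have hAP : AsympTo (fun z => ∑ k ∈ Finset.range N, c k * (f z) ^ k) P N :=
    AsympTo.sum fun k _ => (hApow k).smul (c k)
  have hAcomp : (fun z => ξ (f z) - ∑ k ∈ Finset.range N, c k * (f z) ^ k)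
      =O[𝓝 (0:ℂ)] fun z => z ^ N := by
    have h1 := analytic_asympTo hp N
    have h2 := h1.comp_tendsto hft
    have he : ((fun z : ℂ => ξ z - ∑ k ∈ Finset.range N,
        coeff k (PowerSeries.mk fun k => p.coeff k) * z ^ k) ∘ f)
        = fun z => ξ (f z) - ∑ k ∈ Finset.range N, c k * (f z) ^ k := by
      funext z
      simp only [Function.comp_apply, coeff_mk, hcdef]
    rw [he] at h2
    exact h2.trans hfpow
  have hAxi : AsympTo (fun z => ξ (f z)) P N := by
    have := hAcomp.add hAP
    refine this.congr' ?_ EventuallyEq.rfl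
    refine Eventually.of_forall fun z => ?_
    show (ξ (f z) - ∑ k ∈ Finset.range N, c k * (f z) ^ k)
        + ((∑ k ∈ Finset.range N, c k * (f z) ^ k)
          - ∑ k ∈ Finset.range N, coeff k P * z ^ k)
        = ξ (f z) - ∑ k ∈ Finset.range N, coeff k P * z ^ k
    ring
  have hAid : AsympTo (fun z => z) P N := by
    refine hAxi.congr ?_
    filter_upwards [hinv] with z hz
    rw [hgdef] at *
    exact hz
  have huniq := hAid.unique (asympTo_X (by omega))
  -- apply the formal Lagrange computation
  set b : ℂ := 1 - (α : ℂ) with hbdef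
  have hba : -b = a := by rw [hbdef, ha]; ring
  have hpt : (n : ℂ) * c n = ffc (b * n) (n - 1) / ((n-1).factorial : ℂ) := by
    refine partTwo b n hn c ?_
    intro m h1 h2
    have := huniq m (by omega)
    rw [hba]
    exact this
  -- final algebra
  have hiter : iteratedDeriv n ξ 0 = (n.factorial : ℂ) * c n := by
    have hcn : c n = iteratedDeriv n ξ 0 / (n.factorial : ℂ) := coeff_eq_iteratedDeriv hp n
    have hfn : ((n.factorial : ℕ) : ℂ) ≠ 0 := Nat.cast_ne_zero.mpr (Nat.factorial_ne_zero _)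
    rw [hcn, mul_comm, div_mul_cancel₀ _ hfn]
  have hnfac : (n.factorial : ℂ) = (n : ℂ) * ((n-1).factorial : ℂ) := by
    have hm' : n - 1 + 1 = n := by omega
    have h5 : ((n - 1 : ℕ) : ℂ) + 1 = n := by
      rw [Nat.cast_sub hn]; push_cast; ring
    have e : (((n - 1 + 1).factorial : ℕ) : ℂ)
        = (((n - 1 : ℕ) : ℂ) + 1) * ((n-1).factorial : ℂ) := by
      rw [Nat.factorial_succ]; push_cast; ring
    rw [hm', h5] at e
    exact e
  have hffc : iteratedDeriv n ξ 0 = ffc (b * n) (n - 1) := by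
    have hf0 : (((n-1).factorial : ℕ) : ℂ) ≠ 0 := Nat.cast_ne_zero.mpr (Nat.factorial_ne_zero _)
    calc iteratedDeriv n ξ 0 = ((n-1).factorial : ℂ) * ((n:ℂ) * c n) := by
          rw [hiter, hnfac]; ring
      _ = ffc (b * n) (n - 1) := by
          rw [hpt, mul_div_cancel₀ _ hf0]
  rw [hffc]
  rw [fallingFactorialReal, ffc]
  push_cast [hbdef]
  rfl
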